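/- Fix an integer L ≥ 2, let n = 2^L, let 0 ≤ k ≤ L − 1 and let M_k be the k-th milestone set. Let G be a finite connected simple graph with integer edge weights w : E(G) → ℤ satisfying 1 ≤ w(e) ≤ n for every edge e, and define w'(e) as the least element of M_k that is ≥ w(e). Then every spanning tree of G of minimum total weight with respect to w' has total w-weight at most (1 + 1/2^k) times the total w-weight of a minimum spanning tree of G with respect to w. -/

import Mathlib

/-- The milestone sets `M_k ⊆ [1, 2 ^ L]`: `M_0 = {2 ^ i : 0 ≤ i ≤ L}`, and `M_{j+1}` is
obtained from `M_j` by adding, for every pair of consecutive elements `a < b` of `M_j`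
with `b − a ≥ 2`, the midpoint `(a + b) / 2` (an integer `c` with `a + b = 2 * c`). -/
def milestones (L : ℕ) : ℕ → Finset ℕ
  | 0 => (Finset.range (L + 1)).image (fun i => 2 ^ i)
  | j + 1 =>
      milestones L j ∪
        (Finset.range (2 ^ L + 1)).filter (fun c =>
          ∃ a ∈ milestones L j, ∃ b ∈ milestones L j,
            a < b ∧ (∀ x ∈ milestones L j, ¬(a < x ∧ x < b)) ∧ 2 ≤ b - a ∧ a + b = 2 * c)

/-- The total weight of (the edges of) a graph `T` on a finite vertex type,
with respect to an edge-weight function `w`. -/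
noncomputable def treeWeight {V : Type*} [Fintype V] {R : Type*} [AddCommMonoid R]
    (T : SimpleGraph V) (w : Sym2 V → R) : R :=
  letI : Fintype T.edgeSet := Fintype.ofFinite _
  ∑ e ∈ T.edgeSet.toFinset, w e

lemma milestones_mem_iff (L : ℕ) (hL : 1 ≤ L) :
    ∀ j x, x ∈ milestones L j ↔
      ∃ i, i < L ∧ 2 ^ i ≤ x ∧ x ≤ 2 ^ (i + 1) ∧ 2 ^ (i - j) ∣ (x - 2 ^ i) := by
  intro j
  induction j with
  | zero =>
    intro x
    simp only [milestones, Finset.mem_image, Finset.mem_range, Nat.lt_succ_iff]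
    constructor
    · rintro ⟨i, hi, rfl⟩
      rcases lt_or_eq_of_le hi with hi' | hi'
      · exact ⟨i, hi', le_rfl, Nat.pow_le_pow_right (by norm_num) (by omega), by simp⟩
      · have hsplit : 2 ^ i = 2 * 2 ^ (L - 1) := by
          rw [← pow_succ']; congr 1; omega
        refine ⟨L - 1, by omega, by omega, ?_, ?_⟩
        · have hLL : L - 1 + 1 = L := by omega
          rw [hLL, ← hi']
        · have h2 : 2 ^ i - 2 ^ (L - 1) = 2 ^ (L - 1) := by omega
          rw [h2]
          simp
    · rintro ⟨i, hiL, h1, h2, hdvd⟩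
      have hle : x - 2 ^ i ≤ 2 ^ i := by
        have : 2 ^ (i + 1) = 2 * 2 ^ i := by rw [pow_succ']
        omega
      rcases hdvd with ⟨c, hc⟩
      simp only [Nat.sub_zero] at hc
      have hc1 : c ≤ 1 := by
        by_contra h
        push_neg at h
        have : 2 ^ i * 2 ≤ 2 ^ i * c := Nat.mul_le_mul_left _ h
        have hpos : 0 < 2 ^ i := Nat.pow_pos (by norm_num)
        omega
      interval_cases c
      · exact ⟨i, by omega, by omega⟩
      · exact ⟨i + 1, by omega, by
          have : 2 ^ (i + 1) = 2 * 2 ^ i := by rw [pow_succ']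
          have hpos : 0 < 2 ^ i := Nat.pow_pos (by norm_num)
          omega⟩
  | succ j ih =>
    have hpow : ∀ t, t ≤ L → 2 ^ t ∈ milestones L j := by
      intro t ht
      rw [ih]
      rcases lt_or_eq_of_le ht with h | h
      · exact ⟨t, h, le_rfl, Nat.pow_le_pow_right (by norm_num) (by omega), by simp⟩
      · have hsplit : 2 ^ t = 2 * 2 ^ (L - 1) := by
          rw [← pow_succ']; congr 1; omega
        refine ⟨L - 1, by omega, by omega, by
            have hLL : L - 1 + 1 = L := by omega
            rw [hLL, ← h], ?_⟩
        have h2 : 2 ^ t - 2 ^ (L - 1) = 2 ^ (L - 1) := by omega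
        rw [h2]
        exact pow_dvd_pow 2 (by omega)
    intro x
    simp only [milestones, Finset.mem_union, Finset.mem_filter, Finset.mem_range]
    constructor
    · rintro (hx | ⟨hxr, a, ha, b, hb, hab, hcons, hgap, hmid⟩)
      · rcases (ih x).mp hx with ⟨i, hiL, h1, h2, hdvd⟩
        exact ⟨i, hiL, h1, h2, dvd_trans (pow_dvd_pow 2 (by omega)) hdvd⟩
      · rcases (ih a).mp ha with ⟨i0, hi0L, ha1, ha2, hadvd⟩
        rcases (ih b).mp hb with ⟨i1, hi1L, hb1, hb2, hbdvd⟩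
        have hpos : ∀ t : ℕ, 0 < 2 ^ t := fun t => Nat.pow_pos (by norm_num)
        have ha0 : 1 ≤ a := le_trans (hpos i0) ha1
        set i := Nat.log 2 a with hidef
        have hi1 : 2 ^ i ≤ a := Nat.pow_log_le_self 2 (by omega)
        have hi2 : a < 2 ^ (i + 1) := Nat.lt_pow_succ_log_self (by norm_num) a
        have hiL : i < L := by
          have hbL : b ≤ 2 ^ L := le_trans hb2 (Nat.pow_le_pow_right (by norm_num) (by omega))
          have : 2 ^ i < 2 ^ L := by omega
          exact (Nat.pow_lt_pow_iff_right (by norm_num)).mp this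
        -- divisibility for a w.r.t. exponent i
        have hadvd' : 2 ^ (i - j) ∣ a - 2 ^ i := by
          rcases eq_or_lt_of_le hi1 with h | h
          · rw [← h]; simp
          · have : i0 = i := by
              have e1 : 2 ^ i0 < 2 ^ (i + 1) := by omega
              have e2 : 2 ^ i < 2 ^ (i0 + 1) := by omega
              have := (Nat.pow_lt_pow_iff_right (n := i0) (m := i + 1) (by norm_num : 1 < 2)).mp e1
              have := (Nat.pow_lt_pow_iff_right (n := i) (m := i0 + 1) (by norm_num : 1 < 2)).mp e2
              omega
            rw [← this]; exact hadvd
        -- b ≤ 2^(i+1)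
        have hble : b ≤ 2 ^ (i + 1) := by
          by_contra h
          push_neg at h
          exact hcons (2 ^ (i + 1)) (hpow (i + 1) (by omega)) ⟨hi2, h⟩
        -- divisibility for b w.r.t. exponent i
        have hbdvd' : 2 ^ (i - j) ∣ b - 2 ^ i := by
          rcases eq_or_lt_of_le hble with h | h
          · rw [h]
            have : 2 ^ (i + 1) - 2 ^ i = 2 ^ i := by
              have : 2 ^ (i + 1) = 2 * 2 ^ i := by rw [pow_succ']
              omega
            rw [this]
            exact pow_dvd_pow 2 (by omega)
          · have : i1 = i := by
              have e1 : 2 ^ i1 < 2 ^ (i + 1) := by omega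
              have e2 : 2 ^ i < 2 ^ (i1 + 1) := by omega
              have := (Nat.pow_lt_pow_iff_right (n := i1) (m := i + 1) (by norm_num : 1 < 2)).mp e1
              have := (Nat.pow_lt_pow_iff_right (n := i) (m := i1 + 1) (by norm_num : 1 < 2)).mp e2
              omega
            rw [← this]; exact hbdvd
        have hx1 : 2 ^ i ≤ x := by omega
        have hx2 : x ≤ 2 ^ (i + 1) := by omega
        refine ⟨i, hiL, hx1, hx2, ?_⟩
        rcases le_or_gt i j with hij | hij
        · have : i - (j + 1) = 0 := by omega
          rw [this]; exact one_dvd _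
        · have hsum : (a - 2 ^ i) + (b - 2 ^ i) = 2 * (x - 2 ^ i) := by omega
          have hdvdsum : 2 ^ (i - j) ∣ 2 * (x - 2 ^ i) := by
            rw [← hsum]; exact dvd_add hadvd' hbdvd'
          have hsplit : 2 ^ (i - j) = 2 * 2 ^ (i - (j + 1)) := by
            rw [← pow_succ']; congr 1; omega
          rw [hsplit] at hdvdsum
          exact (mul_dvd_mul_iff_left (two_ne_zero)).mp hdvdsum
    · rintro ⟨i, hiL, h1, h2, hdvd⟩
      by_cases hdj : 2 ^ (i - j) ∣ (x - 2 ^ i)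
      · exact Or.inl ((ih x).mpr ⟨i, hiL, h1, h2, hdj⟩)
      · right
        have hpos : ∀ t : ℕ, 0 < 2 ^ t := fun t => Nat.pow_pos (by norm_num)
        have hij : j < i := by
          by_contra h
          push_neg at h
          have : i - j = 0 := by omega
          rw [this] at hdj
          exact hdj (one_dvd _)
        set g := 2 ^ (i - (j + 1)) with hg
        have hgpos : 0 < g := hpos _
        have h2g : 2 * g = 2 ^ (i - j) := by
          rw [hg, ← pow_succ']; congr 1; omega
        rcases hdvd with ⟨m, hm⟩
        have hmodd : ¬ (2 ∣ m) := by
          rintro ⟨t, ht⟩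
          exact hdj ⟨t, by rw [hm, ht, ← h2g]; ring⟩
        have hm1 : 1 ≤ m := by
          rcases Nat.eq_zero_or_pos m with h | h
          · exfalso; apply hdj; rw [hm, h, Nat.mul_zero]; exact dvd_zero _
          · exact h
        have hgi : g * 2 ^ (j + 1) = 2 ^ i := by
          rw [hg, ← pow_add]; congr 1; omega
        have hp2 : 2 ^ (i + 1) = 2 * 2 ^ i := by rw [pow_succ']
        have hmle : m + 1 ≤ 2 ^ (j + 1) := by
          have hxd : g * m ≤ 2 ^ i := by omega
          have : g * m ≤ g * 2 ^ (j + 1) := by omega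
          have hle : m ≤ 2 ^ (j + 1) := Nat.le_of_mul_le_mul_left this hgpos
          rcases eq_or_lt_of_le hle with h | h
          · exfalso; apply hmodd; rw [h]; exact ⟨2 ^ j, by rw [← pow_succ']⟩
          · omega
        have e1 : g * (m + 1) = g * m + g := by ring
        have e2 : g * (m - 1) + g = g * m := by
          rw [← Nat.mul_succ]; congr 1; omega
        have hgm : g * m = x - 2 ^ i := hm.symm
        have hgm2 : g * (m + 1) ≤ g * 2 ^ (j + 1) :=
          Nat.mul_le_mul_left _ hmle
        have hpowL : 2 ^ (i + 1) ≤ 2 ^ L := Nat.pow_le_pow_right (by norm_num) (by omega)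
        refine ⟨by omega, 2 ^ i + g * (m - 1), ?_, 2 ^ i + g * (m + 1), ?_, by omega, ?_, by omega, by omega⟩
        · -- a ∈ milestones L j
          refine (ih _).mpr ⟨i, hiL, Nat.le_add_right _ _, by omega, ?_⟩
          rw [Nat.add_sub_cancel_left]
          obtain ⟨s, hs⟩ : ∃ s, m - 1 = 2 * s := ⟨(m - 1) / 2, by omega⟩
          exact ⟨s, by rw [hs, ← h2g]; ring⟩
        · -- b ∈ milestones L j
          refine (ih _).mpr ⟨i, hiL, Nat.le_add_right _ _, by omega, ?_⟩
          rw [Nat.add_sub_cancel_left]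
          obtain ⟨s, hs⟩ : ∃ s, m + 1 = 2 * s := ⟨(m + 1) / 2, by omega⟩
          exact ⟨s, by rw [hs, ← h2g]; ring⟩
        · -- consecutiveness
          rintro y hy ⟨hay, hyb⟩
          rcases (ih y).mp hy with ⟨i2, hi2L, hy1, hy2, hydvd⟩
          have hyi : 2 ^ i < y ∧ y < 2 ^ (i + 1) := by
            constructor
            · omega
            · omega
          have hi2i : i2 = i := by
            have e1' : 2 ^ i2 < 2 ^ (i + 1) := by omega
            have e2' : 2 ^ i < 2 ^ (i2 + 1) := by omega
            have := (Nat.pow_lt_pow_iff_right (n := i2) (m := i + 1) (by norm_num : 1 < 2)).mp e1'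
            have := (Nat.pow_lt_pow_iff_right (n := i) (m := i2 + 1) (by norm_num : 1 < 2)).mp e2'
            omega
          rw [hi2i, ← h2g] at hydvd
          rcases hydvd with ⟨t, ht⟩
          have hyv : y = 2 ^ i + g * (2 * t) := by
            have : 2 * g * t = g * (2 * t) := by ring
            omega
          rw [hyv] at hay hyb
          have c1 : m - 1 < 2 * t := Nat.lt_of_mul_lt_mul_left (a := g)
            (by omega : g * (m - 1) < g * (2 * t))
          have c2 : 2 * t < m + 1 := Nat.lt_of_mul_lt_mul_left (a := g)
            (by omega : g * (2 * t) < g * (m + 1))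
          have : m = 2 * t := by omega
          exact hmodd ⟨t, this⟩

lemma exists_milestone (L k x : ℕ) (hL : 1 ≤ L) (hx1 : 1 ≤ x) (hx2 : x ≤ 2 ^ L) :
    ∃ m ∈ milestones L k, x ≤ m ∧ 2 ^ k * (m - x) ≤ x := by
  rcases eq_or_lt_of_le hx2 with hx | hx
  · -- x = 2^L
    refine ⟨x, ?_, le_rfl, by simp⟩
    rw [milestones_mem_iff L hL]
    have hsplit : 2 ^ L = 2 * 2 ^ (L - 1) := by rw [← pow_succ']; congr 1; omega
    refine ⟨L - 1, by omega, by omega, by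
        have hLL : L - 1 + 1 = L := by omega
        rw [hLL]; omega, ?_⟩
    have h2 : x - 2 ^ (L - 1) = 2 ^ (L - 1) := by omega
    rw [h2]
    exact pow_dvd_pow 2 (by omega)
  · set i := Nat.log 2 x with hidef
    have hi1 : 2 ^ i ≤ x := Nat.pow_log_le_self 2 (by omega)
    have hi2 : x < 2 ^ (i + 1) := Nat.lt_pow_succ_log_self (by norm_num) x
    have hiL : i < L := by
      have : 2 ^ i < 2 ^ L := by omega
      exact (Nat.pow_lt_pow_iff_right (by norm_num)).mp this
    set g := 2 ^ (i - k) with hg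
    have hgpos : 0 < g := Nat.pow_pos (by norm_num)
    set d := x - 2 ^ i with hd
    set q := (d + g - 1) / g with hq
    have hmod := Nat.div_add_mod (d + g - 1) g
    have hr : (d + g - 1) % g < g := Nat.mod_lt _ hgpos
    rw [← hq] at hmod
    set t := g * q with ht
    have hdt : d ≤ t ∧ t ≤ d + g - 1 := by omega
    set m := 2 ^ i + t with hmdef
    have hp2 : 2 ^ (i + 1) = 2 * 2 ^ i := by rw [pow_succ']
    -- t ≤ 2^i
    have hti : t ≤ 2 ^ i := by
      rcases le_or_gt k i with hki | hki
      · set s := 2 ^ (i - (i - k)) with hs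
        have hgs : g * s = 2 ^ i := by rw [hg, hs, ← pow_add]; congr 1; omega
        rcases le_or_gt q s with hqs | hqs
        · rw [ht, ← hgs]; exact Nat.mul_le_mul_left _ hqs
        · exfalso
          have : g * (s + 1) ≤ g * q := Nat.mul_le_mul_left _ hqs
          have e : g * (s + 1) = g * s + g := by ring
          omega
      · have : i - k = 0 := by omega
        have hg1 : g = 1 := by rw [hg, this, pow_zero]
        omega
    have hmem : m ∈ milestones L k := by
      rw [milestones_mem_iff L hL]
      refine ⟨i, hiL, Nat.le_add_right _ _, by omega, ?_⟩
      rw [hmdef, Nat.add_sub_cancel_left, ht]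
      exact Dvd.intro _ rfl
    refine ⟨m, hmem, by omega, ?_⟩
    -- 2^k * (m - x) ≤ x
    have hmx : m - x ≤ g - 1 := by omega
    rcases le_or_gt k i with hki | hki
    · have hkg : 2 ^ k * g = 2 ^ i := by rw [hg, ← pow_add]; congr 1; omega
      have h1 : 2 ^ k * (m - x) ≤ 2 ^ k * (g - 1) := Nat.mul_le_mul_left _ hmx
      have h2 : 2 ^ k * (g - 1) + 2 ^ k = 2 ^ k * g := by
        rw [← Nat.mul_succ]; congr 1; omega
      have hkpos : 0 < 2 ^ k := Nat.pow_pos (by norm_num)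
      omega
    · have : i - k = 0 := by omega
      have hg1 : g = 1 := by rw [hg, this, pow_zero]
      have : m = x := by omega
      rw [this]
      simp

/-- **MSTs for milestone-rounded weights are `(1 + 1/2^k)`-approximate MSTs.** Fix
`L ≥ 2`, `n = 2 ^ L` and `0 ≤ k ≤ L − 1`. Let `G` be a finite connected simple graph with
integer edge weights `w` satisfying `1 ≤ w e ≤ n` on every edge, and let `w' e` be the
least element of the milestone set `M_k` that is `≥ w e`. Then every spanning tree `T'` of
`G` of minimum total weight with respect to `w'` has total `w`-weight at most
`(1 + 1 / 2 ^ k)` times the total `w`-weight of a minimum spanning tree `T` of `G` with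
respect to `w`. -/
theorem milestone_rounding_gives_approx_mst {V : Type*} [Fintype V]
    (L k : ℕ) (hL : 2 ≤ L) (hk : k ≤ L - 1)
    (G : SimpleGraph V) (hG : G.Connected) (w w' : Sym2 V → ℤ)
    (hw : ∀ e ∈ G.edgeSet, 1 ≤ w e ∧ w e ≤ 2 ^ L)
    (hw' : ∀ e ∈ G.edgeSet,
      (∃ m ∈ milestones L k, w' e = (m : ℤ)) ∧ w e ≤ w' e ∧
        ∀ x ∈ milestones L k, w e ≤ (x : ℤ) → w' e ≤ (x : ℤ))
    (T' : SimpleGraph V) (hT'G : T' ≤ G) (hT' : T'.IsTree)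
    (hmin' : ∀ S : SimpleGraph V, S ≤ G → S.IsTree → treeWeight T' w' ≤ treeWeight S w')
    (T : SimpleGraph V) (hTG : T ≤ G) (hT : T.IsTree)
    (hmin : ∀ S : SimpleGraph V, S ≤ G → S.IsTree → treeWeight T w ≤ treeWeight S w) :
    ((treeWeight T' w : ℤ) : ℝ) ≤ (1 + 1 / 2 ^ k) * ((treeWeight T w : ℤ) : ℝ) := by
  have hkpos : (0 : ℝ) < 2 ^ k := by positivity
  -- per-edge bound
  have key : ∀ e ∈ G.edgeSet, ((w' e : ℤ) : ℝ) ≤ (1 + 1 / 2 ^ k) * ((w e : ℤ) : ℝ) := by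
    intro e he
    obtain ⟨hwe1, hwe2⟩ := hw e he
    obtain ⟨_, hle, hleast⟩ := hw' e he
    set x := (w e).toNat with hx
    have hxe : (x : ℤ) = w e := Int.toNat_of_nonneg (by linarith)
    have hx1 : 1 ≤ x := by omega
    have hx2 : x ≤ 2 ^ L := by
      have : (x : ℤ) ≤ (2 : ℤ) ^ L := by rw [hxe]; exact hwe2
      exact_mod_cast this
    obtain ⟨m, hmem, hxm, hbound⟩ := exists_milestone L k x (by omega) hx1 hx2
    have hw'm : w' e ≤ (m : ℤ) := hleast m hmem (by rw [← hxe]; exact_mod_cast hxm)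
    have hreal : (m : ℝ) ≤ (1 + 1 / 2 ^ k) * (x : ℝ) := by
      have hnat : 2 ^ k * m ≤ 2 ^ k * x + x := by
        have hsplit : 2 ^ k * m = 2 ^ k * x + 2 ^ k * (m - x) := by
          rw [← Nat.mul_add]; congr 1; omega
        rw [hsplit]
        exact Nat.add_le_add_left hbound _
      have hnatR : (2 : ℝ) ^ k * m ≤ 2 ^ k * x + x := by exact_mod_cast hnat
      have heq : (1 + 1 / 2 ^ k) * (x : ℝ) = (2 ^ k * x + x) / 2 ^ k := by
        field_simp
      rw [heq, le_div_iff₀ hkpos]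
      nlinarith [hnatR]
    calc ((w' e : ℤ) : ℝ) ≤ (m : ℝ) := by exact_mod_cast hw'm
      _ ≤ (1 + 1 / 2 ^ k) * (x : ℝ) := hreal
      _ = (1 + 1 / 2 ^ k) * ((w e : ℤ) : ℝ) := by rw [← hxe]; norm_cast
  -- step 1 : treeWeight T' w ≤ treeWeight T' w'
  have h1 : treeWeight T' w ≤ treeWeight T' w' := by
    letI : Fintype T'.edgeSet := Fintype.ofFinite _
    unfold treeWeight
    apply Finset.sum_le_sum
    intro e he
    rw [Set.mem_toFinset] at he
    exact (hw' e (SimpleGraph.edgeSet_mono hT'G he)).2.1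
  have h2 : treeWeight T' w' ≤ treeWeight T w' := hmin' T hTG hT
  have h3 : ((treeWeight T w' : ℤ) : ℝ) ≤ (1 + 1 / 2 ^ k) * ((treeWeight T w : ℤ) : ℝ) := by
    letI : Fintype T.edgeSet := Fintype.ofFinite _
    unfold treeWeight
    push_cast
    rw [Finset.mul_sum]
    apply Finset.sum_le_sum
    intro e he
    rw [Set.mem_toFinset] at he
    exact key e (SimpleGraph.edgeSet_mono hTG he)
  calc ((treeWeight T' w : ℤ) : ℝ) ≤ ((treeWeight T w' : ℤ) : ℝ) := by
        exact_mod_cast le_trans h1 h2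
    _ ≤ (1 + 1 / 2 ^ k) * ((treeWeight T w : ℤ) : ℝ) := h3
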